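/- arXiv:1605.03456 — 4 statements merged into one kernel-verified Lean document; each statement's English description precedes it below -/
import Mathlib

section
/- Let X be a real topological vector space, D ⊆ X a nonempty set and φ : X → EReal considered only on D. If φ is affine (i.e. D, epi φ and hypo φ are all convex sets) and φ is continuous on D (ContinuousOn φ D), then either φ is constant on D (there is c ∈ EReal with φ(x) = c for all x ∈ D) or φ is finite-valued on D (for all x ∈ D, φ(x) ≠ −∞ and φ(x) ≠ +∞). -/
open Filter Set Topology

section Aux

variable {X : Type*} [AddCommGroup X] [Module ℝ X]
    [TopologicalSpace X] [IsTopologicalAddGroup X] [ContinuousSMul ℝ X]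

/-- If an affine continuous function takes the value `⊤` at a point of its convex
domain and is not `⊥` at another point, it is `⊤` there as well. -/
theorem EReal.aux_affine_top (D : Set X) (φ : X → EReal) (hDconv : Convex ℝ D)
    (hhypo : Convex ℝ {p : X × ℝ | p.1 ∈ D ∧ (p.2 : EReal) ≤ φ p.1})
    (hcont : ContinuousOn φ D) {x₀ y : X} (hx₀ : x₀ ∈ D) (hy : y ∈ D)
    (htop : φ x₀ = ⊤) (hb : φ y ≠ ⊥) : φ y = ⊤ := by
  by_cases hyt : φ y = ⊤
  · exact hyt
  obtain ⟨r, hr⟩ : ∃ r : ℝ, φ y = (r : EReal) := by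
    lift φ y to ℝ using ⟨hyt, hb⟩ with r
    exact ⟨r, rfl⟩
  set f : ℝ → X := fun t => t • x₀ + (1 - t) • y with hf_def
  have key : ∀ t ∈ Set.Ioc (0:ℝ) 1, φ (f t) = ⊤ := by
    intro t ht
    have ht0 : t ≠ 0 := ne_of_gt ht.1
    have hmem : ∀ c : ℝ, ((t*c + (1-t)*r : ℝ) : EReal) ≤ φ (f t) := by
      intro c
      have h1 : (x₀, c) ∈ {p : X × ℝ | p.1 ∈ D ∧ (p.2 : EReal) ≤ φ p.1} := ⟨hx₀, by simp [htop]⟩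
      have h2 : (y, r) ∈ {p : X × ℝ | p.1 ∈ D ∧ (p.2 : EReal) ≤ φ p.1} := ⟨hy, le_of_eq hr.symm⟩
      have h3 := hhypo h1 h2 (a := t) (b := 1 - t) ht.1.le (by linarith [ht.2]) (by ring)
      simpa [Prod.smul_mk, smul_eq_mul, hf_def] using h3.2
    by_contra hne
    have hnb : φ (f t) ≠ ⊥ := by
      intro h
      have := hmem 0
      rw [h, le_bot_iff] at this
      exact (EReal.coe_ne_bot _) this
    obtain ⟨u, hu⟩ : ∃ u : ℝ, φ (f t) = (u : EReal) := by
      lift φ (f t) to ℝ using ⟨hne, hnb⟩ with u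
      exact ⟨u, rfl⟩
    have hc := hmem ((u + 1 - (1-t)*r)/t)
    have heq : t * ((u + 1 - (1-t)*r)/t) + (1-t)*r = u + 1 := by
      field_simp
      ring
    rw [heq, hu, EReal.coe_le_coe_iff] at hc
    linarith
  have hfc : Continuous f := by
    apply Continuous.add
    · exact (continuous_id.smul continuous_const)
    · exact ((continuous_const.sub continuous_id).smul continuous_const)
  have hfa : Tendsto f (𝓝[Set.Ioc (0:ℝ) 1] 0) (𝓝[D] y) := by
    rw [tendsto_nhdsWithin_iff]
    constructor
    · have h0 : f 0 = y := by simp [hf_def]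
      have := hfc.tendsto 0
      rw [h0] at this
      exact this.mono_left nhdsWithin_le_nhds
    · filter_upwards [self_mem_nhdsWithin] with t ht
      exact hDconv hx₀ hy ht.1.le (by linarith [ht.2]) (by ring)
  have hNB : (𝓝[Set.Ioc (0:ℝ) 1] (0:ℝ)).NeBot := by
    apply mem_closure_iff_nhdsWithin_neBot.mp
    rw [closure_Ioc (zero_ne_one)]
    exact ⟨le_refl 0, zero_le_one⟩
  have h3 : Tendsto (φ ∘ f) (𝓝[Set.Ioc (0:ℝ) 1] 0) (𝓝 (φ y)) := (hcont y hy).tendsto.comp hfa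
  have h4 : Tendsto (φ ∘ f) (𝓝[Set.Ioc (0:ℝ) 1] 0) (𝓝 ⊤) := by
    apply Tendsto.congr' _ tendsto_const_nhds
    filter_upwards [self_mem_nhdsWithin] with t ht
    exact (key t ht).symm
  exact tendsto_nhds_unique h3 h4

/-- If an affine continuous function takes the value `⊥` at a point of its convex
domain and is not `⊤` at another point, it is `⊥` there as well. -/
theorem EReal.aux_affine_bot (D : Set X) (φ : X → EReal) (hDconv : Convex ℝ D)
    (hepi : Convex ℝ {p : X × ℝ | p.1 ∈ D ∧ φ p.1 ≤ (p.2 : EReal)})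
    (hcont : ContinuousOn φ D) {x₀ y : X} (hx₀ : x₀ ∈ D) (hy : y ∈ D)
    (hbot : φ x₀ = ⊥) (hb : φ y ≠ ⊤) : φ y = ⊥ := by
  by_cases hyb : φ y = ⊥
  · exact hyb
  obtain ⟨r, hr⟩ : ∃ r : ℝ, φ y = (r : EReal) := by
    lift φ y to ℝ using ⟨hb, hyb⟩ with r
    exact ⟨r, rfl⟩
  set f : ℝ → X := fun t => t • x₀ + (1 - t) • y with hf_def
  have key : ∀ t ∈ Set.Ioc (0:ℝ) 1, φ (f t) = ⊥ := by
    intro t ht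
    have ht0 : t ≠ 0 := ne_of_gt ht.1
    have hmem : ∀ c : ℝ, φ (f t) ≤ ((t*c + (1-t)*r : ℝ) : EReal) := by
      intro c
      have h1 : (x₀, c) ∈ {p : X × ℝ | p.1 ∈ D ∧ φ p.1 ≤ (p.2 : EReal)} := ⟨hx₀, by simp [hbot]⟩
      have h2 : (y, r) ∈ {p : X × ℝ | p.1 ∈ D ∧ φ p.1 ≤ (p.2 : EReal)} := ⟨hy, le_of_eq hr⟩
      have h3 := hepi h1 h2 (a := t) (b := 1 - t) ht.1.le (by linarith [ht.2]) (by ring)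
      simpa [Prod.smul_mk, smul_eq_mul, hf_def] using h3.2
    by_contra hne
    have hnt : φ (f t) ≠ ⊤ := by
      intro h
      have := hmem 0
      rw [h, top_le_iff] at this
      exact (EReal.coe_ne_top _) this
    obtain ⟨u, hu⟩ : ∃ u : ℝ, φ (f t) = (u : EReal) := by
      lift φ (f t) to ℝ using ⟨hnt, hne⟩ with u
      exact ⟨u, rfl⟩
    have hc := hmem ((u - 1 - (1-t)*r)/t)
    have heq : t * ((u - 1 - (1-t)*r)/t) + (1-t)*r = u - 1 := by
      field_simp
      ring
    rw [heq, hu, EReal.coe_le_coe_iff] at hc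
    linarith
  have hfc : Continuous f := by
    apply Continuous.add
    · exact (continuous_id.smul continuous_const)
    · exact ((continuous_const.sub continuous_id).smul continuous_const)
  have hfa : Tendsto f (𝓝[Set.Ioc (0:ℝ) 1] 0) (𝓝[D] y) := by
    rw [tendsto_nhdsWithin_iff]
    constructor
    · have h0 : f 0 = y := by simp [hf_def]
      have := hfc.tendsto 0
      rw [h0] at this
      exact this.mono_left nhdsWithin_le_nhds
    · filter_upwards [self_mem_nhdsWithin] with t ht
      exact hDconv hx₀ hy ht.1.le (by linarith [ht.2]) (by ring)
  have hNB : (𝓝[Set.Ioc (0:ℝ) 1] (0:ℝ)).NeBot := by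
    apply mem_closure_iff_nhdsWithin_neBot.mp
    rw [closure_Ioc (zero_ne_one)]
    exact ⟨le_refl 0, zero_le_one⟩
  have h3 : Tendsto (φ ∘ f) (𝓝[Set.Ioc (0:ℝ) 1] 0) (𝓝 (φ y)) := (hcont y hy).tendsto.comp hfa
  have h4 : Tendsto (φ ∘ f) (𝓝[Set.Ioc (0:ℝ) 1] 0) (𝓝 ⊥) := by
    apply Tendsto.congr' _ tendsto_const_nhds
    filter_upwards [self_mem_nhdsWithin] with t ht
    exact (key t ht).symm
  exact tendsto_nhds_unique h3 h4

end Aux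

/-- An affine function (convex and concave) which is continuous on its effective
domain is constant on its domain or proper (finite-valued on the domain). -/
theorem affine_continuousOn_constant_or_proper {X : Type*} [AddCommGroup X] [Module ℝ X]
    [TopologicalSpace X] [IsTopologicalAddGroup X] [ContinuousSMul ℝ X]
    (D : Set X) (hD : D.Nonempty) (φ : X → EReal)
    (hDconv : Convex ℝ D)
    (hepi : Convex ℝ {p : X × ℝ | p.1 ∈ D ∧ φ p.1 ≤ (p.2 : EReal)})
    (hhypo : Convex ℝ {p : X × ℝ | p.1 ∈ D ∧ (p.2 : EReal) ≤ φ p.1})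
    (hcont : ContinuousOn φ D) :
    (∃ c : EReal, ∀ x ∈ D, φ x = c) ∨ (∀ x ∈ D, φ x ≠ ⊥ ∧ φ x ≠ ⊤) := by
  by_cases htop : ∃ x ∈ D, φ x = ⊤
  · obtain ⟨x₀, hx₀, hx₀top⟩ := htop
    left
    refine ⟨⊤, fun y hy => ?_⟩
    by_cases hyb : φ y = ⊥
    · -- φ takes both values ⊥ and ⊤ : find a finite value on the segment and contradict.
      exfalso
      have hseg : segment ℝ y x₀ ⊆ D := hDconv.segment_subset hy hx₀
      have hpc : IsPreconnected (segment ℝ y x₀) := (convex_segment y x₀).isPreconnected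
      have hIVT := hpc.intermediate_value (left_mem_segment ℝ y x₀) (right_mem_segment ℝ y x₀)
        (hcont.mono hseg)
      have h0 : (0 : EReal) ∈ Set.Icc (φ y) (φ x₀) := by
        rw [hyb, hx₀top]; exact ⟨bot_le, le_top⟩
      obtain ⟨z, hzs, hz0⟩ := hIVT h0
      have hzD : z ∈ D := hseg hzs
      have : φ z = ⊤ := EReal.aux_affine_top D φ hDconv hhypo hcont hx₀ hzD hx₀top
        (by rw [hz0]; exact EReal.coe_ne_bot 0)
      rw [hz0] at this
      exact EReal.coe_ne_top 0 this
    · exact EReal.aux_affine_top D φ hDconv hhypo hcont hx₀ hy hx₀top hyb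
  · by_cases hbot : ∃ x ∈ D, φ x = ⊥
    · obtain ⟨x₀, hx₀, hx₀bot⟩ := hbot
      left
      refine ⟨⊥, fun y hy => ?_⟩
      exact EReal.aux_affine_bot D φ hDconv hepi hcont hx₀ hy hx₀bot
        (fun h => htop ⟨y, hy, h⟩)
    · right
      intro x hx
      exact ⟨fun h => hbot ⟨x, hx, h⟩, fun h => htop ⟨x, hx, h⟩⟩
end

section
/- Let X be a real topological vector space and φ : X → EReal a continuous function (with respect to the order topology on EReal). If φ is linear in the sense that epi φ and hypo φ are convex sets and φ(0) = 0, then φ is finite-valued: φ(x) ≠ −∞ and φ(x) ≠ +∞ for every x ∈ X. -/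
/-- A continuous linear extended real-valued function on a topological vector
space is finite-valued. -/
theorem continuous_linear_finite {X : Type*} [AddCommGroup X] [Module ℝ X]
    [TopologicalSpace X] [IsTopologicalAddGroup X] [ContinuousSMul ℝ X]
    (φ : X → EReal) (hcont : Continuous φ)
    (hepi : Convex ℝ {p : X × ℝ | φ p.1 ≤ (p.2 : EReal)})
    (hhypo : Convex ℝ {p : X × ℝ | (p.2 : EReal) ≤ φ p.1})
    (h0 : φ 0 = 0) :
    ∀ x : X, φ x ≠ ⊥ ∧ φ x ≠ ⊤ := by
  have key : ∀ x : X, ∀ t : ℝ, 0 < t → t ≤ 1 →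
      (φ x = ⊤ → φ (t • x) = ⊤) ∧ (φ x = ⊥ → φ (t • x) = ⊥) := by
    intro x t ht ht1
    constructor
    · intro hx
      rw [EReal.eq_top_iff_forall_lt]
      intro y
      have hr : (((y + 1) / t : ℝ) : EReal) ≤ φ x := by rw [hx]; exact le_top
      have h0' : ((0 : ℝ) : EReal) ≤ φ 0 := by rw [h0]; simp
      have hc := hhypo (show ((x, (y + 1) / t) : X × ℝ) ∈
          {p : X × ℝ | (p.2 : EReal) ≤ φ p.1} from hr)
        (show ((0, 0) : X × ℝ) ∈ {p : X × ℝ | (p.2 : EReal) ≤ φ p.1} from h0')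
        ht.le (by linarith : (0:ℝ) ≤ 1 - t) (by ring)
      simp only [Prod.smul_mk, Prod.mk_add_mk, smul_zero, add_zero, smul_eq_mul,
        mul_zero, Set.mem_setOf_eq] at hc
      have ht' : t * ((y + 1) / t) = y + 1 := by field_simp
      rw [ht'] at hc
      calc (y : EReal) < ((y + 1 : ℝ) : EReal) := by
            exact_mod_cast (by linarith : y < y + 1)
        _ ≤ φ (t • x) := hc
    · intro hx
      rw [EReal.eq_bot_iff_forall_lt]
      intro y
      have hr : φ x ≤ (((y - 1) / t : ℝ) : EReal) := by rw [hx]; exact bot_le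
      have h0' : φ 0 ≤ ((0 : ℝ) : EReal) := by rw [h0]; simp
      have hc := hepi (show ((x, (y - 1) / t) : X × ℝ) ∈
          {p : X × ℝ | φ p.1 ≤ (p.2 : EReal)} from hr)
        (show ((0, 0) : X × ℝ) ∈ {p : X × ℝ | φ p.1 ≤ (p.2 : EReal)} from h0')
        ht.le (by linarith : (0:ℝ) ≤ 1 - t) (by ring)
      simp only [Prod.smul_mk, Prod.mk_add_mk, smul_zero, add_zero, smul_eq_mul,
        mul_zero, Set.mem_setOf_eq] at hc
      have ht' : t * ((y - 1) / t) = y - 1 := by field_simp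
      rw [ht'] at hc
      calc φ (t • x) ≤ ((y - 1 : ℝ) : EReal) := hc
        _ < (y : EReal) := by exact_mod_cast (by linarith : y - 1 < y)
  intro x
  have hg : Continuous fun t : ℝ => φ (t • x) :=
    hcont.comp (continuous_id.smul continuous_const)
  have hg0 : φ ((0 : ℝ) • x) = 0 := by rw [zero_smul, h0]
  constructor
  · intro hx
    have hev : ∀ᶠ t in nhds (0 : ℝ), φ (t • x) ∈ Set.Ioi (⊥ : EReal) :=
      hg.continuousAt.eventually_mem (isOpen_Ioi.mem_nhds (by
        rw [hg0]; simp))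
    obtain ⟨ε, hε, hε'⟩ := Metric.eventually_nhds_iff.mp hev
    set t := min ε 1 / 2 with htdef
    have htpos : 0 < t := by positivity
    have ht1 : t ≤ 1 := by
      have : min ε 1 ≤ 1 := min_le_right _ _
      linarith
    have hmem := hε' (show dist t 0 < ε by
      rw [Real.dist_eq, sub_zero, abs_of_pos htpos]
      have : min ε 1 ≤ ε := min_le_left _ _
      linarith)
    rw [(key x t htpos ht1).2 hx] at hmem
    exact lt_irrefl _ (Set.mem_Ioi.mp hmem)
  · intro hx
    have hev : ∀ᶠ t in nhds (0 : ℝ), φ (t • x) ∈ Set.Iio (⊤ : EReal) :=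
      hg.continuousAt.eventually_mem (isOpen_Iio.mem_nhds (by
        rw [hg0]; simp))
    obtain ⟨ε, hε, hε'⟩ := Metric.eventually_nhds_iff.mp hev
    set t := min ε 1 / 2 with htdef
    have htpos : 0 < t := by positivity
    have ht1 : t ≤ 1 := by
      have : min ε 1 ≤ 1 := min_le_right _ _
      linarith
    have hmem := hε' (show dist t 0 < ε by
      rw [Real.dist_eq, sub_zero, abs_of_pos htpos]
      have : min ε 1 ≤ ε := min_le_left _ _
      linarith)
    rw [(key x t htpos ht1).1 hx] at hmem
    exact lt_irrefl _ (Set.mem_Iio.mp hmem)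
end

section
/- Let X be a real vector space and φ : X → EReal be defined on all of X. Then φ is linear (epi φ and hypo φ are convex sets and φ(0) = 0) if and only if φ is homogeneous and additive, i.e.: epi φ is a nonempty cone (closed under multiplication by nonnegative real scalars in X × ℝ), φ(−x) = −φ(x) for all x ∈ X, epi φ + epi φ ⊆ epi φ, and hypo φ + hypo φ ⊆ hypo φ. -/
open Pointwise

private lemma ereal_exists_real_ge {a : EReal} (h : a ≠ ⊤) : ∃ r : ℝ, a ≤ r := by
  induction a using EReal.rec with
  | bot => exact ⟨0, bot_le⟩
  | coe r => exact ⟨r, le_refl _⟩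
  | top => exact absurd rfl h

private lemma ereal_exists_real_le {a : EReal} (h : a ≠ ⊥) : ∃ r : ℝ, (r : EReal) ≤ a := by
  induction a using EReal.rec with
  | bot => exact absurd rfl h
  | coe r => exact ⟨r, le_refl _⟩
  | top => exact ⟨0, le_top⟩

private lemma ereal_exists_real_eq {a : EReal} (hb : a ≠ ⊥) (ht : a ≠ ⊤) :
    ∃ r : ℝ, a = (r : EReal) := by
  induction a using EReal.rec with
  | bot => exact absurd rfl hb
  | coe r => exact ⟨r, rfl⟩
  | top => exact absurd rfl ht

private lemma ereal_eq_zero_of_neg_eq {a : EReal} (h : -a = a) : a = 0 := by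
  induction a using EReal.rec with
  | bot => simp at h
  | coe r =>
    have : (-r : ℝ) = r := by exact_mod_cast h
    have : r = 0 := by linarith
    simp [this]
  | top => simp at h

/-- An extended real-valued function on the whole space is linear (epigraph and
hypograph convex, `φ 0 = 0`) iff it is homogeneous (epigraph a nonempty cone and
`φ` odd) and additive (epigraph and hypograph closed under Minkowski addition). -/
theorem linear_iff_homogeneous_additive {X : Type*} [AddCommGroup X] [Module ℝ X]
    (φ : X → EReal) :
    (Convex ℝ {p : X × ℝ | φ p.1 ≤ (p.2 : EReal)} ∧
      Convex ℝ {p : X × ℝ | (p.2 : EReal) ≤ φ p.1} ∧ φ 0 = 0) ↔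
    ({p : X × ℝ | φ p.1 ≤ (p.2 : EReal)}.Nonempty ∧
      (∀ l : ℝ, 0 ≤ l → ∀ p ∈ {p : X × ℝ | φ p.1 ≤ (p.2 : EReal)},
        l • p ∈ {p : X × ℝ | φ p.1 ≤ (p.2 : EReal)}) ∧
      (∀ x : X, φ (-x) = -φ x) ∧
      ({p : X × ℝ | φ p.1 ≤ (p.2 : EReal)} + {p : X × ℝ | φ p.1 ≤ (p.2 : EReal)} ⊆
        {p : X × ℝ | φ p.1 ≤ (p.2 : EReal)}) ∧
      ({p : X × ℝ | (p.2 : EReal) ≤ φ p.1} + {p : X × ℝ | (p.2 : EReal) ≤ φ p.1} ⊆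
        {p : X × ℝ | (p.2 : EReal) ≤ φ p.1})) := by
  constructor
  · rintro ⟨he, hh, h0⟩
    -- pointwise consequences of convexity
    have key_epi : ∀ (x y : X) (t s a b : ℝ), 0 ≤ a → 0 ≤ b → a + b = 1 →
        φ x ≤ (t : EReal) → φ y ≤ (s : EReal) →
        φ (a • x + b • y) ≤ ((a * t + b * s : ℝ) : EReal) := by
      intro x y t s a b ha hb hab hx hy
      have := he (x := (x, t)) (y := (y, s)) hx hy ha hb hab
      simpa [Prod.smul_mk, Prod.mk_add_mk, smul_eq_mul] using this
    have key_hypo : ∀ (x y : X) (t s a b : ℝ), 0 ≤ a → 0 ≤ b → a + b = 1 →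
        (t : EReal) ≤ φ x → (s : EReal) ≤ φ y →
        ((a * t + b * s : ℝ) : EReal) ≤ φ (a • x + b • y) := by
      intro x y t s a b ha hb hab hx hy
      have := hh (x := (x, t)) (y := (y, s)) hx hy ha hb hab
      simpa [Prod.smul_mk, Prod.mk_add_mk, smul_eq_mul] using this
    -- midpoint consequences
    have mid_epi : ∀ (x : X) (t s : ℝ), φ x ≤ (t : EReal) → φ (-x) ≤ (s : EReal) →
        -t ≤ s := by
      intro x t s hx hy
      have := key_epi x (-x) t s (1/2) (1/2) (by norm_num) (by norm_num) (by norm_num) hx hy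
      rw [show (1/2 : ℝ) • x + (1/2 : ℝ) • (-x) = 0 by module, h0] at this
      have : (0 : ℝ) ≤ 1/2 * t + 1/2 * s := by exact_mod_cast this
      linarith
    have mid_hypo : ∀ (x : X) (t s : ℝ), (t : EReal) ≤ φ x → (s : EReal) ≤ φ (-x) →
        s ≤ -t := by
      intro x t s hx hy
      have := key_hypo x (-x) t s (1/2) (1/2) (by norm_num) (by norm_num) (by norm_num) hx hy
      rw [show (1/2 : ℝ) • x + (1/2 : ℝ) • (-x) = 0 by module, h0] at this
      have : 1/2 * t + 1/2 * s ≤ (0 : ℝ) := by exact_mod_cast this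
      linarith
    -- oddness
    have hodd : ∀ x : X, φ (-x) = -φ x := by
      intro x
      rcases eq_or_ne (φ x) ⊥ with hb | hb
      · rw [hb]
        by_contra hne
        have hne' : φ (-x) ≠ ⊤ := by simpa using hne
        obtain ⟨s, hs⟩ := ereal_exists_real_ge hne'
        have := mid_epi x (-(s + 1)) s (hb ▸ bot_le) hs
        linarith
      rcases eq_or_ne (φ x) ⊤ with ht | ht
      · rw [ht]
        by_contra hne
        have hne' : φ (-x) ≠ ⊥ := by simpa using hne
        obtain ⟨s, hs⟩ := ereal_exists_real_le hne'
        have := mid_hypo x (-s + 1) s (ht ▸ le_top) hs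
        linarith
      obtain ⟨r, hr⟩ := ereal_exists_real_eq hb ht
      have hnt : φ (-x) ≠ ⊤ := by
        intro h
        have := mid_hypo x r (-r + 1) hr.ge (h ▸ le_top)
        linarith
      have hnb : φ (-x) ≠ ⊥ := by
        intro h
        have := mid_epi x r (-r - 1) hr.le (h ▸ bot_le)
        linarith
      obtain ⟨s, hs⟩ := ereal_exists_real_eq hnb hnt
      have h1 := mid_epi x r s hr.le hs.le
      have h2 := mid_hypo x r s hr.ge hs.ge
      have : s = -r := le_antisymm h2 (by linarith)
      rw [hs, hr, this, EReal.coe_neg]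
    -- homogeneity of the epigraph
    have hom : ∀ l : ℝ, 0 ≤ l → ∀ (x : X) (t : ℝ), φ x ≤ (t : EReal) →
        φ (l • x) ≤ ((l * t : ℝ) : EReal) := by
      intro l hl x t hx
      rcases le_or_gt l 1 with hl1 | hl1
      · have := key_epi x 0 t 0 l (1 - l) hl (by linarith) (by ring) hx (by simp [h0])
        simpa using this
      · by_contra hcon
        push_neg at hcon
        obtain ⟨u, hu1, hu2⟩ := EReal.exists_between_coe_real hcon
        have hu2' : ((u : ℝ) : EReal) ≤ φ (l • x) := hu2.le
        have hlpos : (0 : ℝ) < l := by linarith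
        have := key_hypo (l • x) 0 u 0 (1/l) (1 - 1/l)
          (by positivity)
          (by rw [sub_nonneg]; rw [div_le_one hlpos]; linarith)
          (by ring) hu2' (by simp [h0])
        rw [show (1/l : ℝ) • (l • x) + (1 - 1/l : ℝ) • (0 : X) = x by
          rw [smul_zero, add_zero, smul_smul, one_div, inv_mul_cancel₀ hlpos.ne', one_smul]]
          at this
        have hle : ((1/l * u + (1 - 1/l) * 0 : ℝ) : EReal) ≤ (t : EReal) := this.trans hx
        have hle' : 1/l * u + (1 - 1/l) * 0 ≤ t := by exact_mod_cast hle
        have hu1' : l * t < u := by exact_mod_cast hu1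
        have : u ≤ l * t := by
          have h3 : u / l ≤ t := by
            rw [div_eq_inv_mul, ← one_div]; linarith
          calc u = l * (u / l) := by field_simp
          _ ≤ l * t := by nlinarith
        linarith
    -- epigraph additivity (pointwise)
    have addE : ∀ (x y : X) (t s : ℝ), φ x ≤ (t : EReal) → φ y ≤ (s : EReal) →
        φ (x + y) ≤ ((t + s : ℝ) : EReal) := by
      intro x y t s hx hy
      have h1 := key_epi x y t s (1/2) (1/2) (by norm_num) (by norm_num) (by norm_num) hx hy
      have h2 := hom 2 (by norm_num) _ _ h1
      rw [show (2 : ℝ) • ((1/2 : ℝ) • x + (1/2 : ℝ) • y) = x + y by module] at h2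
      convert h2 using 2
      ring
    -- hypograph additivity (pointwise), via oddness
    have addH : ∀ (x y : X) (t s : ℝ), (t : EReal) ≤ φ x → (s : EReal) ≤ φ y →
        ((t + s : ℝ) : EReal) ≤ φ (x + y) := by
      intro x y t s hx hy
      have hx' : φ (-x) ≤ ((-t : ℝ) : EReal) := by
        rw [hodd, EReal.coe_neg]; exact EReal.neg_le_neg_iff.2 hx
      have hy' : φ (-y) ≤ ((-s : ℝ) : EReal) := by
        rw [hodd, EReal.coe_neg]; exact EReal.neg_le_neg_iff.2 hy
      have := addE (-x) (-y) (-t) (-s) hx' hy'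
      rw [show (-x) + (-y) = -(x + y) by abel, hodd] at this
      rw [show ((-t + -s : ℝ) : EReal) = -((t + s : ℝ) : EReal) by
        rw [show (-t + -s : ℝ) = -(t + s) from by ring, EReal.coe_neg]] at this
      exact EReal.neg_le_neg_iff.1 this
    refine ⟨⟨(0, 0), by simp [h0]⟩, ?_, hodd, ?_, ?_⟩
    · rintro l hl ⟨x, t⟩ hp
      simpa [smul_eq_mul] using hom l hl x t hp
    · rintro p ⟨⟨x, t⟩, hx, ⟨y, s⟩, hy, rfl⟩
      exact addE x y t s hx hy
    · rintro p ⟨⟨x, t⟩, hx, ⟨y, s⟩, hy, rfl⟩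
      exact addH x y t s hx hy
  · rintro ⟨-, hcone, hodd, haddE, haddH⟩
    have h0 : φ 0 = 0 := by
      have := hodd 0
      rw [neg_zero] at this
      exact ereal_eq_zero_of_neg_eq this.symm
    -- the hypograph is also a cone
    have hconeH : ∀ l : ℝ, 0 ≤ l → ∀ p ∈ {p : X × ℝ | (p.2 : EReal) ≤ φ p.1},
        l • p ∈ {p : X × ℝ | (p.2 : EReal) ≤ φ p.1} := by
      rintro l hl ⟨x, t⟩ hp
      have hp' : φ (-x) ≤ ((-t : ℝ) : EReal) := by
        rw [hodd, EReal.coe_neg]; exact EReal.neg_le_neg_iff.2 hp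
      have := hcone l hl (-x, -t) hp'
      simp only [Set.mem_setOf_eq, Prod.smul_mk, smul_eq_mul] at this ⊢
      rw [smul_neg, hodd] at this
      rw [show (l * -t : ℝ) = -(l * t) by ring, EReal.coe_neg] at this
      exact EReal.neg_le_neg_iff.1 this
    refine ⟨?_, ?_, h0⟩
    · intro p hp q hq a b ha hb _
      exact haddE (Set.add_mem_add (hcone a ha p hp) (hcone b hb q hq))
    · intro p hp q hq a b ha hb _
      exact haddH (Set.add_mem_add (hconeH a ha p hp) (hconeH b hb q hq))
end

section
/- Let X be a real topological vector space and φ : X → EReal a continuous function (with respect to the order topology on EReal). Then φ is linear (epi φ and hypo φ are convex sets and φ(0) = 0) if and only if φ is additive (epi φ + epi φ ⊆ epi φ and hypo φ + hypo φ ⊆ hypo φ) and φ(0) = 0. -/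
open Pointwise

private lemma exists_real_le' {r : ℝ} {a : EReal} (h : (r : EReal) < a) :
    ∃ s : ℝ, r < s ∧ (s : EReal) ≤ a := by
  obtain ⟨s, hs1, hs2⟩ := EReal.exists_between_coe_real h
  exact ⟨s, by exact_mod_cast hs1, hs2.le⟩

private lemma exists_real_ge' {r : ℝ} {a : EReal} (h : a < (r : EReal)) :
    ∃ s : ℝ, s < r ∧ a ≤ (s : EReal) := by
  obtain ⟨s, hs1, hs2⟩ := EReal.exists_between_coe_real h
  exact ⟨s, by exact_mod_cast hs2, hs1.le⟩

/-- A continuous extended real-valued function on a topological vector space is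
linear (epigraph and hypograph convex, `φ 0 = 0`) iff it is additive and `φ 0 = 0`. -/
theorem continuous_linear_iff_additive {X : Type*} [AddCommGroup X] [Module ℝ X]
    [TopologicalSpace X] [IsTopologicalAddGroup X] [ContinuousSMul ℝ X]
    (φ : X → EReal) (hcont : Continuous φ) :
    (Convex ℝ {p : X × ℝ | φ p.1 ≤ (p.2 : EReal)} ∧
      Convex ℝ {p : X × ℝ | (p.2 : EReal) ≤ φ p.1} ∧ φ 0 = 0) ↔
    (({p : X × ℝ | φ p.1 ≤ (p.2 : EReal)} + {p : X × ℝ | φ p.1 ≤ (p.2 : EReal)} ⊆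
        {p : X × ℝ | φ p.1 ≤ (p.2 : EReal)}) ∧
      ({p : X × ℝ | (p.2 : EReal) ≤ φ p.1} + {p : X × ℝ | (p.2 : EReal) ≤ φ p.1} ⊆
        {p : X × ℝ | (p.2 : EReal) ≤ φ p.1}) ∧ φ 0 = 0) := by
  constructor
  · rintro ⟨hE, hH, h0⟩
    have h0E : ((0 : X), (0 : ℝ)) ∈ {p : X × ℝ | φ p.1 ≤ (p.2 : EReal)} := by
      simp [Set.mem_setOf_eq, h0]
    have h0H : ((0 : X), (0 : ℝ)) ∈ {p : X × ℝ | (p.2 : EReal) ≤ φ p.1} := by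
      simp [Set.mem_setOf_eq, h0]
    refine ⟨?_, ?_, h0⟩
    · rintro p hp
      rw [Set.mem_add] at hp
      obtain ⟨⟨x, t⟩, hx, ⟨y, u⟩, hy, rfl⟩ := hp
      simp only [Set.mem_setOf_eq, Prod.mk_add_mk]
      -- midpoint is in the epigraph
      have hmid := hE hx hy (by norm_num : (0:ℝ) ≤ 1/2) (by norm_num : (0:ℝ) ≤ 1/2)
        (by norm_num)
      simp only [Set.mem_setOf_eq, Prod.smul_mk, Prod.mk_add_mk, smul_eq_mul] at hmid
      by_contra hcon
      rw [not_le] at hcon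
      obtain ⟨s, hs1, hs2⟩ := exists_real_le' hcon
      have hsH : ((x + y), s) ∈ {p : X × ℝ | (p.2 : EReal) ≤ φ p.1} := hs2
      have hmid2 := hH hsH h0H (by norm_num : (0:ℝ) ≤ 1/2) (by norm_num : (0:ℝ) ≤ 1/2)
        (by norm_num)
      simp only [Set.mem_setOf_eq, Prod.smul_mk, Prod.mk_add_mk, smul_eq_mul,
        smul_zero, add_zero, mul_zero] at hmid2
      have heq : (1/2 : ℝ) • (x + y) = (1/2 : ℝ) • x + (1/2 : ℝ) • y := smul_add _ _ _
      rw [heq] at hmid2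
      have : ((1/2 * s : ℝ) : EReal) ≤ ((1/2 * t + 1/2 * u : ℝ) : EReal) :=
        le_trans hmid2 hmid
      rw [EReal.coe_le_coe_iff] at this
      linarith
    · rintro p hp
      rw [Set.mem_add] at hp
      obtain ⟨⟨x, t⟩, hx, ⟨y, u⟩, hy, rfl⟩ := hp
      simp only [Set.mem_setOf_eq, Prod.mk_add_mk]
      have hmid := hH hx hy (by norm_num : (0:ℝ) ≤ 1/2) (by norm_num : (0:ℝ) ≤ 1/2)
        (by norm_num)
      simp only [Set.mem_setOf_eq, Prod.smul_mk, Prod.mk_add_mk, smul_eq_mul] at hmid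
      by_contra hcon
      rw [not_le] at hcon
      obtain ⟨s, hs1, hs2⟩ := exists_real_ge' hcon
      have hsE : ((x + y), s) ∈ {p : X × ℝ | φ p.1 ≤ (p.2 : EReal)} := hs2
      have hmid2 := hE hsE h0E (by norm_num : (0:ℝ) ≤ 1/2) (by norm_num : (0:ℝ) ≤ 1/2)
        (by norm_num)
      simp only [Set.mem_setOf_eq, Prod.smul_mk, Prod.mk_add_mk, smul_eq_mul,
        smul_zero, add_zero, mul_zero] at hmid2
      have heq : (1/2 : ℝ) • (x + y) = (1/2 : ℝ) • x + (1/2 : ℝ) • y := smul_add _ _ _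
      rw [heq] at hmid2
      have : ((1/2 * t + 1/2 * u : ℝ) : EReal) ≤ ((1/2 * s : ℝ) : EReal) :=
        le_trans hmid hmid2
      rw [EReal.coe_le_coe_iff] at this
      linarith
  · rintro ⟨hEa, hHa, h0⟩
    -- pointwise additivity
    have epiAdd : ∀ {x y : X} {t u : ℝ}, φ x ≤ (t : EReal) → φ y ≤ (u : EReal) →
        φ (x + y) ≤ ((t + u : ℝ) : EReal) := by
      intro x y t u hx hy
      have : ((x, t) : X × ℝ) + (y, u) ∈
          {p : X × ℝ | φ p.1 ≤ (p.2 : EReal)} + {p : X × ℝ | φ p.1 ≤ (p.2 : EReal)} :=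
        Set.add_mem_add hx hy
      have := hEa this
      simpa using this
    have hypoAdd : ∀ {x y : X} {t u : ℝ}, (t : EReal) ≤ φ x → (u : EReal) ≤ φ y →
        ((t + u : ℝ) : EReal) ≤ φ (x + y) := by
      intro x y t u hx hy
      have : ((x, t) : X × ℝ) + (y, u) ∈
          {p : X × ℝ | (p.2 : EReal) ≤ φ p.1} + {p : X × ℝ | (p.2 : EReal) ≤ φ p.1} :=
        Set.add_mem_add hx hy
      have := hHa this
      simpa using this
    -- natural number scaling
    have epiN : ∀ (n : ℕ) {x : X} {t : ℝ}, φ x ≤ (t : EReal) →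
        φ ((n + 1) • x) ≤ ((((n : ℝ) + 1) * t : ℝ) : EReal) := by
      intro n
      induction n with
      | zero => intro x t hx; simpa using hx
      | succ m ih =>
        intro x t hx
        have h1 : (m + 1 + 1) • x = (m + 1) • x + x := succ_nsmul x (m + 1)
        rw [h1]
        have := epiAdd (ih hx) hx
        convert this using 2
        push_cast
        ring
    have hypoN : ∀ (n : ℕ) {x : X} {t : ℝ}, (t : EReal) ≤ φ x →
        ((((n : ℝ) + 1) * t : ℝ) : EReal) ≤ φ ((n + 1) • x) := by
      intro n
      induction n with
      | zero => intro x t hx; simpa using hx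
      | succ m ih =>
        intro x t hx
        have h1 : (m + 1 + 1) • x = (m + 1) • x + x := succ_nsmul x (m + 1)
        rw [h1]
        have := hypoAdd (ih hx) hx
        convert this using 2
        push_cast
        ring
    -- division
    have epiDiv : ∀ (n : ℕ) {x : X} {t : ℝ}, φ x ≤ (t : EReal) →
        φ ((((n : ℝ) + 1))⁻¹ • x) ≤ ((t / ((n : ℝ) + 1) : ℝ) : EReal) := by
      intro n x t hx
      set y := (((n : ℝ) + 1))⁻¹ • x with hy
      have hpos : (0 : ℝ) < (n : ℝ) + 1 := by positivity
      have hxy : (n + 1) • y = x := by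
        rw [hy, ← Nat.cast_smul_eq_nsmul ℝ, smul_smul]
        push_cast
        rw [mul_inv_cancel₀ hpos.ne', one_smul]
      by_contra hcon
      rw [not_le] at hcon
      obtain ⟨s, hs1, hs2⟩ := exists_real_le' hcon
      have := hypoN n hs2
      rw [hxy] at this
      have h2 : ((((n : ℝ) + 1) * s : ℝ) : EReal) ≤ ((t : ℝ) : EReal) := le_trans this hx
      rw [EReal.coe_le_coe_iff] at h2
      rw [div_lt_iff₀ hpos] at hs1
      nlinarith
    have hypoDiv : ∀ (n : ℕ) {x : X} {t : ℝ}, (t : EReal) ≤ φ x →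
        ((t / ((n : ℝ) + 1) : ℝ) : EReal) ≤ φ ((((n : ℝ) + 1))⁻¹ • x) := by
      intro n x t hx
      set y := (((n : ℝ) + 1))⁻¹ • x with hy
      have hpos : (0 : ℝ) < (n : ℝ) + 1 := by positivity
      have hxy : (n + 1) • y = x := by
        rw [hy, ← Nat.cast_smul_eq_nsmul ℝ, smul_smul]
        push_cast
        rw [mul_inv_cancel₀ hpos.ne', one_smul]
      by_contra hcon
      rw [not_le] at hcon
      obtain ⟨s, hs1, hs2⟩ := exists_real_ge' hcon
      have := epiN n hs2
      rw [hxy] at this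
      have h2 : ((t : ℝ) : EReal) ≤ ((((n : ℝ) + 1) * s : ℝ) : EReal) := le_trans hx this
      rw [EReal.coe_le_coe_iff] at h2
      rw [lt_div_iff₀ hpos] at hs1
      nlinarith
    -- rational scaling
    have epiQ : ∀ (q : ℚ), 0 < q → ∀ {x : X} {t : ℝ}, φ x ≤ (t : EReal) →
        φ ((q : ℝ) • x) ≤ (((q : ℝ) * t : ℝ) : EReal) := by
      intro q hq x t hx
      obtain ⟨a, ha⟩ : ∃ a : ℕ, q.num.toNat = a + 1 := by
        have hn := Rat.num_pos.mpr hq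
        exact ⟨q.num.toNat - 1, by omega⟩
      obtain ⟨b, hb⟩ : ∃ b : ℕ, q.den = b + 1 := ⟨q.den - 1, by have := q.den_pos; omega⟩
      have h1 := epiN a hx
      have h2 := epiDiv b h1
      have hqc : (q : ℝ) = ((a : ℝ) + 1) / ((b : ℝ) + 1) := by
        rw [Rat.cast_def]
        congr 1
        · have : ((q.num.toNat : ℤ) : ℝ) = ((a : ℝ) + 1) := by rw [ha]; push_cast; ring
          rw [← this]
          congr 1
          exact (Int.toNat_of_nonneg (Rat.num_pos.mpr hq).le).symm
        · rw [hb]; push_cast; ring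
      have heq : (((b : ℝ) + 1))⁻¹ • ((a + 1) • x) = (q : ℝ) • x := by
        rw [← Nat.cast_smul_eq_nsmul ℝ, smul_smul, hqc]
        congr 1
        push_cast
        field_simp
      have heq2 : ((a : ℝ) + 1) * t / ((b : ℝ) + 1) = (q : ℝ) * t := by
        rw [hqc]; ring
      rw [heq, heq2] at h2
      exact h2
    have hypoQ : ∀ (q : ℚ), 0 < q → ∀ {x : X} {t : ℝ}, (t : EReal) ≤ φ x →
        (((q : ℝ) * t : ℝ) : EReal) ≤ φ ((q : ℝ) • x) := by
      intro q hq x t hx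
      obtain ⟨a, ha⟩ : ∃ a : ℕ, q.num.toNat = a + 1 := by
        have hn := Rat.num_pos.mpr hq
        exact ⟨q.num.toNat - 1, by omega⟩
      obtain ⟨b, hb⟩ : ∃ b : ℕ, q.den = b + 1 := ⟨q.den - 1, by have := q.den_pos; omega⟩
      have h1 := hypoN a hx
      have h2 := hypoDiv b h1
      have hqc : (q : ℝ) = ((a : ℝ) + 1) / ((b : ℝ) + 1) := by
        rw [Rat.cast_def]
        congr 1
        · have : ((q.num.toNat : ℤ) : ℝ) = ((a : ℝ) + 1) := by rw [ha]; push_cast; ring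
          rw [← this]
          congr 1
          exact (Int.toNat_of_nonneg (Rat.num_pos.mpr hq).le).symm
        · rw [hb]; push_cast; ring
      have heq : (((b : ℝ) + 1))⁻¹ • ((a + 1) • x) = (q : ℝ) • x := by
        rw [← Nat.cast_smul_eq_nsmul ℝ, smul_smul, hqc]
        congr 1
        push_cast
        field_simp
      have heq2 : ((a : ℝ) + 1) * t / ((b : ℝ) + 1) = (q : ℝ) * t := by
        rw [hqc]; ring
      rw [heq, heq2] at h2
      exact h2
    -- the key continuity/density argument
    have keyE : ∀ (x y : X) (t u : ℝ), φ x ≤ (t : EReal) → φ y ≤ (u : EReal) →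
        ∀ a ∈ Set.Icc (0:ℝ) 1,
          φ (a • x + (1 - a) • y) ≤ ((a * t + (1 - a) * u : ℝ) : EReal) := by
      intro x y t u hx hy
      set S := {a : ℝ | φ (a • x + (1 - a) • y) ≤ ((a * t + (1 - a) * u : ℝ) : EReal)}
        with hSdef
      have hSclosed : IsClosed S := by
        apply isClosed_le
        · exact hcont.comp (by fun_prop)
        · exact continuous_coe_real_ereal.comp (by fun_prop)
      have hQ : ∀ q : ℚ, 0 < q → q < 1 → (q : ℝ) ∈ S := by
        intro q hq0 hq1
        have h1 := epiQ q hq0 hx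
        have h2 := epiQ (1 - q) (by linarith) hy
        have := epiAdd h1 h2
        simp only [hSdef, Set.mem_setOf_eq]
        convert this using 3 <;> push_cast <;> ring
      have hIoo : Set.Ioo (0:ℝ) 1 ⊆ S := by
        have hdense := Rat.denseRange_cast (𝕜 := ℝ)
        have h1 : Set.Ioo (0:ℝ) 1 ⊆ closure (Set.Ioo (0:ℝ) 1 ∩ Set.range ((↑) : ℚ → ℝ)) :=
          hdense.open_subset_closure_inter isOpen_Ioo
        intro a ha
        have hmem := h1 ha
        have hsub : Set.Ioo (0:ℝ) 1 ∩ Set.range ((↑) : ℚ → ℝ) ⊆ S := by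
          rintro _ ⟨⟨hq0, hq1⟩, ⟨q, rfl⟩⟩
          exact hQ q (by exact_mod_cast hq0) (by exact_mod_cast hq1)
        exact hSclosed.closure_subset ((closure_mono hsub) hmem)
      rintro a ⟨ha0, ha1⟩
      rcases eq_or_lt_of_le ha0 with h | h
      · simpa [← h] using hy
      rcases eq_or_lt_of_le ha1 with h' | h'
      · simpa [h'] using hx
      exact hIoo ⟨h, h'⟩
    have keyH : ∀ (x y : X) (t u : ℝ), (t : EReal) ≤ φ x → (u : EReal) ≤ φ y →
        ∀ a ∈ Set.Icc (0:ℝ) 1,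
          ((a * t + (1 - a) * u : ℝ) : EReal) ≤ φ (a • x + (1 - a) • y) := by
      intro x y t u hx hy
      set S := {a : ℝ | ((a * t + (1 - a) * u : ℝ) : EReal) ≤ φ (a • x + (1 - a) • y)}
        with hSdef
      have hSclosed : IsClosed S := by
        apply isClosed_le
        · exact continuous_coe_real_ereal.comp (by fun_prop)
        · exact hcont.comp (by fun_prop)
      have hQ : ∀ q : ℚ, 0 < q → q < 1 → (q : ℝ) ∈ S := by
        intro q hq0 hq1
        have h1 := hypoQ q hq0 hx
        have h2 := hypoQ (1 - q) (by linarith) hy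
        have := hypoAdd h1 h2
        simp only [hSdef, Set.mem_setOf_eq]
        convert this using 3 <;> push_cast <;> ring
      have hIoo : Set.Ioo (0:ℝ) 1 ⊆ S := by
        have hdense := Rat.denseRange_cast (𝕜 := ℝ)
        have h1 : Set.Ioo (0:ℝ) 1 ⊆ closure (Set.Ioo (0:ℝ) 1 ∩ Set.range ((↑) : ℚ → ℝ)) :=
          hdense.open_subset_closure_inter isOpen_Ioo
        intro a ha
        have hmem := h1 ha
        have hsub : Set.Ioo (0:ℝ) 1 ∩ Set.range ((↑) : ℚ → ℝ) ⊆ S := by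
          rintro _ ⟨⟨hq0, hq1⟩, ⟨q, rfl⟩⟩
          exact hQ q (by exact_mod_cast hq0) (by exact_mod_cast hq1)
        exact hSclosed.closure_subset ((closure_mono hsub) hmem)
      rintro a ⟨ha0, ha1⟩
      rcases eq_or_lt_of_le ha0 with h | h
      · simpa [← h] using hy
      rcases eq_or_lt_of_le ha1 with h' | h'
      · simpa [h'] using hx
      exact hIoo ⟨h, h'⟩
    refine ⟨?_, ?_, h0⟩
    · rintro ⟨x, t⟩ hx ⟨y, u⟩ hy a b ha hb hab
      simp only [Set.mem_setOf_eq] at hx hy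
      simp only [Set.mem_setOf_eq, Prod.smul_mk, Prod.mk_add_mk, smul_eq_mul]
      have hb' : b = 1 - a := by linarith
      subst hb'
      exact keyE x y t u hx hy a ⟨ha, by linarith⟩
    · rintro ⟨x, t⟩ hx ⟨y, u⟩ hy a b ha hb hab
      simp only [Set.mem_setOf_eq] at hx hy
      simp only [Set.mem_setOf_eq, Prod.smul_mk, Prod.mk_add_mk, smul_eq_mul]
      have hb' : b = 1 - a := by linarith
      subst hb'
      exact keyH x y t u hx hy a ⟨ha, by linarith⟩
end
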